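/- arXiv:1701.07495 — 2 statements merged into one kernel-verified Lean document; each statement's English description precedes it below -/
import Mathlib

section
/- The map sending a pair (ℓ, Z), where ℓ ∈ {0, 1, ..., 2^n − 1} (with the convention Φ_0 = {1, ..., 2^n−1} and Φ_ℓ = Φ_0 \ {ℓ} for ℓ ≥ 1) and Z ⊆ Φ_ℓ, to the pair of sets (Z, Φ_ℓ \ Z) is injective. In particular, the number of such pairs is 2^{2^n − 1} + (2^n − 1)·2^{2^n − 2}, which is strictly greater than 2^{2^n + n − 2}. -/
/-- `Φ n ℓ` is `{1, ..., 2^n − 1}` if `ℓ = 0`, and `{1, ..., 2^n − 1} \ {ℓ}` otherwise. -/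
def Phi (n ℓ : ℕ) : Finset ℕ :=
  if ℓ = 0 then Finset.Icc 1 (2 ^ n - 1) else Finset.Icc 1 (2 ^ n - 1) \ {ℓ}

lemma mem_Icc_of (n ℓ : ℕ) (h1 : 1 ≤ ℓ) (h2 : ℓ < 2 ^ n) :
    ℓ ∈ Finset.Icc 1 (2 ^ n - 1) := by
  simp only [Finset.mem_Icc]
  exact ⟨h1, Nat.le_sub_one_of_lt h2⟩

lemma phi_inj (n : ℕ) (ℓ₁ ℓ₂ : ℕ) (h1 : ℓ₁ < 2 ^ n) (h2 : ℓ₂ < 2 ^ n)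
    (h : Phi n ℓ₁ = Phi n ℓ₂) : ℓ₁ = ℓ₂ := by
  unfold Phi at h
  rcases Nat.eq_zero_or_pos ℓ₁ with e1 | e1 <;> rcases Nat.eq_zero_or_pos ℓ₂ with e2 | e2
  · omega
  · rw [if_pos e1, if_neg (by omega : ℓ₂ ≠ 0)] at h
    have : ℓ₂ ∈ Finset.Icc 1 (2 ^ n - 1) := mem_Icc_of n ℓ₂ e2 h2
    rw [h] at this
    simp at this
  · rw [if_neg (by omega : ℓ₁ ≠ 0), if_pos e2] at h
    have : ℓ₁ ∈ Finset.Icc 1 (2 ^ n - 1) := mem_Icc_of n ℓ₁ e1 h1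
    rw [← h] at this
    simp at this
  · simp only [if_neg (by omega : ℓ₁ ≠ 0), if_neg (by omega : ℓ₂ ≠ 0)] at h
    have m1 : ℓ₁ ∈ Finset.Icc 1 (2 ^ n - 1) := mem_Icc_of n ℓ₁ e1 h1
    have : ℓ₁ ∉ Finset.Icc 1 (2 ^ n - 1) \ {ℓ₁} := by simp
    rw [h] at this
    simp only [Finset.mem_sdiff, Finset.mem_singleton, not_and, not_not] at this
    exact this m1

lemma phi_card (n ℓ : ℕ) (h1 : 1 ≤ ℓ) (h2 : ℓ < 2 ^ n) :
    (Phi n ℓ).card = 2 ^ n - 2 := by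
  unfold Phi
  rw [if_neg (by omega : ℓ ≠ 0), Finset.card_sdiff_of_subset (by simpa using mem_Icc_of n ℓ h1 h2)]
  simp [Nat.card_Icc]
  omega

theorem stmt_4 (n : ℕ) (hn : 2 ≤ n) :
    (∀ ℓ₁ ∈ Finset.range (2 ^ n), ∀ ℓ₂ ∈ Finset.range (2 ^ n),
      ∀ Z₁ ⊆ Phi n ℓ₁, ∀ Z₂ ⊆ Phi n ℓ₂,
      (Z₁, Phi n ℓ₁ \ Z₁) = (Z₂, Phi n ℓ₂ \ Z₂) → ℓ₁ = ℓ₂ ∧ Z₁ = Z₂) ∧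
    ((Finset.range (2 ^ n)).sigma (fun ℓ => (Phi n ℓ).powerset)).card
      = 2 ^ (2 ^ n - 1) + (2 ^ n - 1) * 2 ^ (2 ^ n - 2) ∧
    2 ^ (2 ^ n - 1) + (2 ^ n - 1) * 2 ^ (2 ^ n - 2) > 2 ^ (2 ^ n + n - 2) := by
  have hpn : 4 ≤ 2 ^ n := by
    calc 4 = 2 ^ 2 := rfl
    _ ≤ 2 ^ n := Nat.pow_le_pow_right (by norm_num) hn
  refine ⟨?_, ?_, ?_⟩
  · intro ℓ₁ hℓ₁ ℓ₂ hℓ₂ Z₁ hZ₁ Z₂ hZ₂ h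
    rw [Finset.mem_range] at hℓ₁ hℓ₂
    rw [Prod.mk.injEq] at h
    obtain ⟨hZ, hC⟩ := h
    have hphi : Phi n ℓ₁ = Phi n ℓ₂ := by
      have e1 : Phi n ℓ₁ = Z₁ ∪ (Phi n ℓ₁ \ Z₁) := (Finset.union_sdiff_of_subset hZ₁).symm
      have e2 : Phi n ℓ₂ = Z₂ ∪ (Phi n ℓ₂ \ Z₂) := (Finset.union_sdiff_of_subset hZ₂).symm
      rw [e1, e2, hC, hZ]
    exact ⟨phi_inj n ℓ₁ ℓ₂ hℓ₁ hℓ₂ hphi, hZ⟩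
  · rw [Finset.card_sigma]
    have hsplit : Finset.range (2 ^ n) = insert 0 (Finset.Ico 1 (2 ^ n)) := by
      ext x
      simp [Finset.mem_range, Finset.mem_Ico]
      omega
    rw [hsplit, Finset.sum_insert (by simp)]
    have h0 : (Phi n 0).powerset.card = 2 ^ (2 ^ n - 1) := by
      rw [Finset.card_powerset]
      unfold Phi
      simp [Nat.card_Icc]
    rw [h0]
    congr 1
    have hc : ∀ ℓ ∈ Finset.Ico 1 (2 ^ n), (Phi n ℓ).powerset.card = 2 ^ (2 ^ n - 2) := by
      intro ℓ hℓ
      rw [Finset.mem_Ico] at hℓ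
      rw [Finset.card_powerset, phi_card n ℓ hℓ.1 hℓ.2]
    rw [Finset.sum_congr rfl hc, Finset.sum_const, Nat.card_Ico, smul_eq_mul]
  · have key : 2 ^ (2 ^ n - 1) + (2 ^ n - 1) * 2 ^ (2 ^ n - 2)
        = (2 ^ n + 1) * 2 ^ (2 ^ n - 2) := by
      have h1 : 2 ^ n - 1 = (2 ^ n - 2) + 1 := by omega
      rw [h1, pow_succ]
      generalize (2 : ℕ) ^ (2 ^ n - 2) = x
      obtain ⟨m, hm⟩ : ∃ m, 2 ^ n = m + 2 := ⟨2 ^ n - 2, by omega⟩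
      rw [hm, Nat.add_sub_cancel]
      ring
    rw [key]
    have : 2 ^ (2 ^ n + n - 2) = 2 ^ n * 2 ^ (2 ^ n - 2) := by
      rw [← pow_add]
      congr 1
      omega
    rw [this]
    exact Nat.mul_lt_mul_of_pos_right (by omega) (by positivity)
end

section
/- For any ℓ with 2 ≤ ℓ ≤ 2^n − 1 and any two distinct subsets Z, W of Φ_ℓ = {2,...,2^n−1} \ {ℓ}: either the product of elements of Z ∪ (Φ_ℓ \ W) is strictly less than (2^n−1)!/ℓ, or the product of elements of W ∪ (Φ_ℓ \ Z) is strictly less than (2^n−1)!/ℓ. -/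
lemma aux_prod_lt (Φ S : Finset ℕ) (hΦ : ∀ y ∈ Φ, 2 ≤ y) (x : ℕ) (hx : x ∈ Φ)
    (hS : S ⊆ Φ.erase x) : (∏ y ∈ S, y) < ∏ y ∈ Φ, y := by
  have h1 : (∏ y ∈ S, y) ≤ ∏ y ∈ Φ.erase x, y := by
    apply Finset.prod_le_prod_of_subset_of_one_le' hS
    intro i hi _
    exact le_trans (by norm_num) (hΦ i (Finset.mem_of_mem_erase hi))
  have h2 : ∏ y ∈ Φ, y = x * ∏ y ∈ Φ.erase x, y := (Finset.mul_prod_erase Φ (fun y => y) hx).symm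
  have hp : 0 < ∏ y ∈ Φ.erase x, y :=
    Finset.prod_pos fun i hi => lt_of_lt_of_le (by norm_num) (hΦ i (Finset.mem_of_mem_erase hi))
  have hx2 : 2 ≤ x := hΦ x hx
  calc (∏ y ∈ S, y) ≤ ∏ y ∈ Φ.erase x, y := h1
    _ < x * ∏ y ∈ Φ.erase x, y := by nlinarith
    _ = ∏ y ∈ Φ, y := h2.symm

theorem stmt_19 (n : ℕ) (hn : 2 ≤ n) (ℓ : ℕ) (hℓ₁ : 2 ≤ ℓ) (hℓ₂ : ℓ ≤ 2 ^ n - 1)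
    (Z W : Finset ℕ)
    (hZ : Z ⊆ Finset.Icc 2 (2 ^ n - 1) \ {ℓ}) (hW : W ⊆ Finset.Icc 2 (2 ^ n - 1) \ {ℓ})
    (hne : Z ≠ W) :
    (∏ x ∈ Z ∪ ((Finset.Icc 2 (2 ^ n - 1) \ {ℓ}) \ W), x) < Nat.factorial (2 ^ n - 1) / ℓ ∨
    (∏ x ∈ W ∪ ((Finset.Icc 2 (2 ^ n - 1) \ {ℓ}) \ Z), x) < Nat.factorial (2 ^ n - 1) / ℓ := by
  set m := 2 ^ n - 1 with hm
  set Φ : Finset ℕ := Finset.Icc 2 m \ {ℓ} with hΦdef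
  have hΦ2 : ∀ y ∈ Φ, 2 ≤ y := by
    intro y hy
    exact (Finset.mem_Icc.mp (Finset.mem_sdiff.mp hy).1).1
  have hm1 : 1 ≤ m := le_trans hℓ₁ hℓ₂ |>.trans' (by norm_num)
  have hℓmem : ℓ ∈ Finset.Icc 2 m := Finset.mem_Icc.mpr ⟨hℓ₁, hℓ₂⟩
  have hΦerase : Φ = (Finset.Icc 2 m).erase ℓ := by
    rw [hΦdef, Finset.sdiff_singleton_eq_erase]
  have hfact : Nat.factorial m = ∏ y ∈ Finset.Icc 2 m, y := by
    have h1 : Finset.Ico 1 (m + 1) = insert 1 (Finset.Icc 2 m) := by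
      ext y
      simp only [Finset.mem_Icc, Finset.mem_Ico, Finset.mem_insert]
      omega
    rw [← Finset.prod_Ico_id_eq_factorial m, h1, Finset.prod_insert (by simp), one_mul]
  have hsplit : Nat.factorial m = ℓ * ∏ y ∈ Φ, y := by
    rw [hfact, hΦerase, ← Finset.mul_prod_erase (Finset.Icc 2 m) (fun y => y) hℓmem]
  have hdiv : Nat.factorial m / ℓ = ∏ y ∈ Φ, y := by
    rw [hsplit, Nat.mul_div_cancel_left _ (by omega)]
  obtain ⟨x, hx⟩ : ∃ x, (x ∈ Z ∧ x ∉ W) ∨ (x ∈ W ∧ x ∉ Z) := by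
    by_contra h
    push_neg at h
    exact hne (Finset.ext fun a => ⟨fun ha => ((h a).1 ha), fun ha => ((h a).2 ha)⟩)
  rcases hx with ⟨hxZ, hxW⟩ | ⟨hxW, hxZ⟩
  · right
    rw [hdiv]
    refine aux_prod_lt Φ _ hΦ2 x (hZ hxZ) ?_
    intro y hy
    rcases Finset.mem_union.mp hy with hy | hy
    · exact Finset.mem_erase.mpr ⟨fun h => hxW (h ▸ hy), hW hy⟩
    · have := Finset.mem_sdiff.mp hy
      exact Finset.mem_erase.mpr ⟨fun h => this.2 (h ▸ hxZ), this.1⟩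
  · left
    rw [hdiv]
    refine aux_prod_lt Φ _ hΦ2 x (hW hxW) ?_
    intro y hy
    rcases Finset.mem_union.mp hy with hy | hy
    · exact Finset.mem_erase.mpr ⟨fun h => hxZ (h ▸ hy), hZ hy⟩
    · have := Finset.mem_sdiff.mp hy
      exact Finset.mem_erase.mpr ⟨fun h => this.2 (h ▸ hxW), this.1⟩
end
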